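/- Let f ∈ C²(T²) have mean value zero and f ≠ 0. Then the supremum over closed geodesics γ of (1/|γ|)|∫_γ f dH¹| is strictly positive. -/

import Mathlib

open MeasureTheory

/-- A function on `ℝ²` that is `ℤ²`-periodic, i.e. a function on the torus `T²`. -/
def Periodic2 (f : ℝ × ℝ → ℂ) : Prop :=
  ∀ x y : ℝ, f (x + 1, y) = f (x, y) ∧ f (x, y + 1) = f (x, y)

/-- The Fourier coefficient `f̂(k) = ∫_{[0,1]²} f(x,y) e^{-2πi(k₁x + k₂y)}`. -/
noncomputable def fc (f : ℝ × ℝ → ℂ) (k : ℤ × ℤ) : ℂ :=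
  ∫ x in (0:ℝ)..1, ∫ y in (0:ℝ)..1,
    f (x, y) * Complex.exp (-2 * (Real.pi : ℂ) * Complex.I * ((k.1 : ℂ) * x + (k.2 : ℂ) * y))

/-- The average of `f` over the closed geodesic `γ(t) = (a t, b t + c)`, `t ∈ [0,1]`:
`(1/|γ|) ∫_γ f dH¹ = ∫₀¹ f(γ(t)) dt`. -/
noncomputable def geodAvg (f : ℝ × ℝ → ℂ) (a b : ℤ) (c : ℝ) : ℂ :=
  ∫ t in (0:ℝ)..1, f ((a : ℝ) * t, (b : ℝ) * t + c)

/-- The average of `f` over the general closed geodesic `γ(t) = p + t (a,b)`, `t ∈ [0,1]`. -/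
noncomputable def geodAvgP (f : ℝ × ℝ → ℂ) (a b : ℤ) (p : ℝ × ℝ) : ℂ :=
  ∫ t in (0:ℝ)..1, f (p.1 + (a : ℝ) * t, p.2 + (b : ℝ) * t)

/-- The squared `L²(T²)` norm of `f`. -/
noncomputable def L2sq (f : ℝ × ℝ → ℂ) : ℝ :=
  ∫ x in (0:ℝ)..1, ∫ y in (0:ℝ)..1, ‖f (x, y)‖ ^ 2

/-- The `L¹(T²)` norm of `f`. -/
noncomputable def L1norm (f : ℝ × ℝ → ℂ) : ℝ :=
  ∫ x in (0:ℝ)..1, ∫ y in (0:ℝ)..1, ‖f (x, y)‖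

/-- Partial derivative in the first variable. -/
noncomputable def pd1 (f : ℝ × ℝ → ℂ) : ℝ × ℝ → ℂ :=
  fun v => deriv (fun x => f (x, v.2)) v.1

/-- Partial derivative in the second variable. -/
noncomputable def pd2 (f : ℝ × ℝ → ℂ) : ℝ × ℝ → ℂ :=
  fun v => deriv (fun y => f (v.1, y)) v.2

/-- The mixed partial derivative `∂_α f` for the multi-index `α = (α₁, α₂)`. -/
noncomputable def pdMix (a1 a2 : ℕ) (f : ℝ × ℝ → ℂ) : ℝ × ℝ → ℂ :=
  pd1^[a1] (pd2^[a2] f)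

/-- The squared `L²(T²)` norm of `∇f`. -/
noncomputable def gradL2sq (f : ℝ × ℝ → ℂ) : ℝ :=
  ∫ x in (0:ℝ)..1, ∫ y in (0:ℝ)..1, (‖pd1 f (x, y)‖ ^ 2 + ‖pd2 f (x, y)‖ ^ 2)

/-- The set of absolute average values of `f` over all closed geodesics of `T²`. -/
def geodVals (f : ℝ × ℝ → ℂ) : Set ℝ :=
  {v : ℝ | ∃ (a b : ℤ) (p : ℝ × ℝ), Int.gcd a b = 1 ∧ v = ‖geodAvgP f a b p‖}

section Helpers

open intervalIntegral Real Complex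

/-- Fubini for continuous functions on the unit square. -/
lemma swap01 (F : ℝ → ℝ → ℂ) (hF : Continuous (Function.uncurry F)) :
    ∫ x in (0:ℝ)..1, ∫ y in (0:ℝ)..1, F x y = ∫ y in (0:ℝ)..1, ∫ x in (0:ℝ)..1, F x y := by
  have h01 : (0:ℝ) ≤ 1 := zero_le_one
  simp_rw [intervalIntegral.integral_of_le h01]
  have hInt : Integrable (Function.uncurry F)
      ((volume.restrict (Set.Ioc (0:ℝ) 1)).prod (volume.restrict (Set.Ioc (0:ℝ) 1))) := by
    rw [Measure.prod_restrict]
    refine (hF.continuousOn.integrableOn_compact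
      (IsCompact.prod isCompact_Icc isCompact_Icc)).mono_set
      (Set.prod_mono Set.Ioc_subset_Icc_self Set.Ioc_subset_Icc_self)
  exact MeasureTheory.integral_integral_swap hInt

/-- A continuous 1-periodic function with all Fourier coefficients zero vanishes. -/
lemma oneD (g : ℝ → ℂ) (hc : Continuous g) (hp : Function.Periodic g 1)
    (h : ∀ n : ℤ, (∫ x in (0:ℝ)..1, g x * Complex.exp (-2 * (Real.pi:ℂ) * Complex.I * n * x)) = 0) :
    ∀ x, g x = 0 := by
  haveI : Fact (0 < (1:ℝ)) := ⟨zero_lt_one⟩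
  have hend : g 0 = g (0 + 1) := by rw [zero_add, ← hp 0, zero_add]
  have hFc : Continuous (AddCircle.liftIco 1 0 g) :=
    AddCircle.liftIco_continuous hend hc.continuousOn
  set F : C(AddCircle (1:ℝ), ℂ) := ⟨AddCircle.liftIco 1 0 g, hFc⟩ with hF
  have hcoeff : ∀ n : ℤ, fourierCoeff (F : AddCircle (1:ℝ) → ℂ) n = 0 := by
    intro n
    have heq : fourierCoeff (AddCircle.liftIco 1 0 g) n
        = fourierCoeffOn (lt_add_of_pos_right (0:ℝ) zero_lt_one) g n :=
      fourierCoeff_liftIco_eq g n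
    have h2 : fourierCoeffOn (lt_add_of_pos_right (0:ℝ) zero_lt_one) g n = 0 := by
      rw [fourierCoeffOn_eq_integral]
      have hpt : ∀ x : ℝ, (fourier (-n) (x : AddCircle ((0:ℝ) + 1 - 0))) • g x
          = g x * Complex.exp (-2 * (Real.pi:ℂ) * Complex.I * n * x) := by
        intro x
        rw [fourier_coe_apply, smul_eq_mul, mul_comm]
        congr 1
        push_cast
        norm_num
      rw [intervalIntegral.integral_congr (fun x _ => hpt x), zero_add, h n]
      simp
    exact heq.trans h2
  set L := ContinuousMap.toLp (E := ℂ) 2 AddCircle.haarAddCircle ℂ F with hL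
  have hrepr : fourierBasis.repr L = 0 := by
    ext n
    rw [fourierBasis_repr, hL, fourierCoeff_toLp]
    exact hcoeff n
  have hL0 : L = 0 := by
    apply fourierBasis.repr.injective
    rw [hrepr, map_zero]
  have hF0 : F = 0 := by
    apply ContinuousMap.toLp_injective (μ := AddCircle.haarAddCircle) (𝕜 := ℂ) (p := 2)
    rw [← hL, hL0, map_zero]
  have hIco : ∀ x ∈ Set.Ico (0:ℝ) 1, g x = 0 := by
    intro x hx
    have := AddCircle.liftIco_coe_apply (f := g) (a := (0:ℝ)) (p := (1:ℝ)) (by simpa using hx)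
    rw [← this]
    show F _ = 0
    rw [hF0]; rfl
  intro x
  have hfr : g x = g (Int.fract x) := by
    have := hp.sub_int_mul_eq (x := x) (n := ⌊x⌋)
    rw [mul_one] at this
    rw [← this]; rfl
  rw [hfr]
  exact hIco _ ⟨Int.fract_nonneg x, Int.fract_lt_one x⟩

/-- Shift invariance of the integral of a periodic function. -/
lemma shift1 (h : ℝ → ℂ) (hp : Function.Periodic h 1) (s : ℝ) :
    ∫ x in (0:ℝ)..1, h (x + s) = ∫ x in (0:ℝ)..1, h x := by
  rw [intervalIntegral.integral_comp_add_right]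
  have := hp.intervalIntegral_add_eq s 0
  simpa [zero_add, add_comm] using this

/-- The exponential `e^{-2πi(k₁x+k₂y)}`. -/
noncomputable def ee (k₁ k₂ : ℤ) (x y : ℝ) : ℂ :=
  Complex.exp (-2 * (Real.pi:ℂ) * Complex.I * ((k₁:ℂ) * x + (k₂:ℂ) * y))

lemma ee_cont (k₁ k₂ : ℤ) : Continuous (fun p : ℝ × ℝ => ee k₁ k₂ p.1 p.2) := by
  unfold ee; fun_prop

lemma ee_shift (k₁ k₂ a b : ℤ) (hab : k₁ * a + k₂ * b = 0) (x y t : ℝ) :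
    ee k₁ k₂ (x + (a:ℝ) * t) (y + (b:ℝ) * t) = ee k₁ k₂ x y := by
  unfold ee
  congr 1
  have : ((k₁:ℂ) * (a:ℂ) + (k₂:ℂ) * (b:ℂ)) = 0 := by
    have := congrArg (fun n : ℤ => (n : ℂ)) hab
    push_cast at this
    exact this
  push_cast
  linear_combination (-2 * (Real.pi:ℂ) * Complex.I * (t:ℂ)) * this

lemma exp_eq_of_sub_int (z w : ℂ) (n : ℤ) (h : z = w + n * (2 * (Real.pi:ℂ) * Complex.I)) :
    Complex.exp z = Complex.exp w := by
  rw [h, Complex.exp_add, Complex.exp_int_mul_two_pi_mul_I, mul_one]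

lemma ee_per1 (k₁ k₂ : ℤ) (y : ℝ) : Function.Periodic (fun x => ee k₁ k₂ x y) 1 := by
  intro x
  show ee k₁ k₂ (x + 1) y = ee k₁ k₂ x y
  exact exp_eq_of_sub_int _ _ (-k₁) (by push_cast; ring)

lemma ee_per2 (k₁ k₂ : ℤ) (x : ℝ) : Function.Periodic (fun y => ee k₁ k₂ x y) 1 := by
  intro y
  show ee k₁ k₂ x (y + 1) = ee k₁ k₂ x y
  exact exp_eq_of_sub_int _ _ (-k₂) (by push_cast; ring)

end Helpers

section StepA
open intervalIntegral Real Complex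

lemma primitive_perp (k₁ k₂ : ℤ) (hk : ¬(k₁ = 0 ∧ k₂ = 0)) :
    ∃ a b : ℤ, Int.gcd a b = 1 ∧ k₁ * a + k₂ * b = 0 := by
  have hne : k₂ ≠ 0 ∨ k₁ ≠ 0 := by tauto
  have hdpos : 0 < Int.gcd k₂ k₁ := Int.gcd_pos_iff.mpr hne
  set d : ℤ := (Int.gcd k₂ k₁ : ℤ) with hd
  have h2 : d ∣ k₂ := Int.gcd_dvd_left k₂ k₁
  have h1 : d ∣ k₁ := Int.gcd_dvd_right k₂ k₁
  refine ⟨k₂ / d, -(k₁ / d), ?_, ?_⟩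
  · have : Int.gcd (k₂ / d) (-(k₁ / d)) = Int.gcd (k₂ / d) (k₁ / d) := by
      simp [Int.gcd, Int.natAbs_neg]
    rw [this]
    exact Int.gcd_div_gcd_div_gcd hdpos
  · have key : k₁ * (k₂ / d) = k₂ * (k₁ / d) := by
      rw [← Int.mul_ediv_assoc _ h2, ← Int.mul_ediv_assoc _ h1, mul_comm k₁ k₂]
    rw [mul_neg]
    omega

/-- The integrand of the Fourier coefficient. -/
noncomputable def Gg (g : ℝ × ℝ → ℂ) (k₁ k₂ : ℤ) (x y : ℝ) : ℂ := g (x, y) * ee k₁ k₂ x y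

/-- The shifted integrand. -/
noncomputable def Fg (g : ℝ × ℝ → ℂ) (k₁ k₂ a b : ℤ) (t x y : ℝ) : ℂ :=
  g (x + (a:ℝ) * t, y + (b:ℝ) * t) * ee k₁ k₂ x y

lemma Gg_cont (g : ℝ × ℝ → ℂ) (hg : Continuous g) (k₁ k₂ : ℤ) :
    Continuous (Function.uncurry (Gg g k₁ k₂)) := by
  unfold Function.uncurry Gg ee
  have h1 : Continuous (fun p : ℝ × ℝ => (p.1, p.2)) := by fun_prop
  exact (hg.comp h1).mul (by fun_prop)

lemma Fg_cont (g : ℝ × ℝ → ℂ) (hg : Continuous g) (k₁ k₂ a b : ℤ) :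
    Continuous (fun q : (ℝ × ℝ) × ℝ => Fg g k₁ k₂ a b q.1.1 q.1.2 q.2) := by
  unfold Fg ee
  have h1 : Continuous (fun q : (ℝ × ℝ) × ℝ =>
      (q.1.2 + (a:ℝ) * q.1.1, q.2 + (b:ℝ) * q.1.1)) := by fun_prop
  exact (hg.comp h1).mul (by fun_prop)

lemma stepA (g : ℝ × ℝ → ℂ) (hg : Continuous g) (hper : Periodic2 g)
    (hz : ∀ (a b : ℤ) (p : ℝ × ℝ), Int.gcd a b = 1 → geodAvgP g a b p = 0)
    (k₁ k₂ : ℤ) (hk : ¬(k₁ = 0 ∧ k₂ = 0)) :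
    (∫ x in (0:ℝ)..1, ∫ y in (0:ℝ)..1, g (x, y) * ee k₁ k₂ x y) = 0 := by
  obtain ⟨a, b, hab, hperp⟩ := primitive_perp k₁ k₂ hk
  have hGper2 : ∀ x, Function.Periodic (fun y => Gg g k₁ k₂ x y) 1 := by
    intro x y
    simp only [Gg]
    rw [(hper x y).2]
    congr 1
    exact ee_per2 k₁ k₂ x y
  have hGper1 : ∀ y, Function.Periodic (fun x => Gg g k₁ k₂ x y) 1 := by
    intro y x
    simp only [Gg]
    rw [(hper x y).1]
    congr 1
    exact ee_per1 k₁ k₂ y x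
  -- for each t, the (x,y)-integral of the shifted integrand equals that of Gg
  have hconst : ∀ t : ℝ, (∫ x in (0:ℝ)..1, ∫ y in (0:ℝ)..1, Fg g k₁ k₂ a b t x y)
      = ∫ x in (0:ℝ)..1, ∫ y in (0:ℝ)..1, Gg g k₁ k₂ x y := by
    intro t
    have hshift : ∀ x y : ℝ, Fg g k₁ k₂ a b t x y
        = Gg g k₁ k₂ (x + (a:ℝ) * t) (y + (b:ℝ) * t) := by
      intro x y
      unfold Fg Gg
      rw [ee_shift k₁ k₂ a b hperp x y t]
    simp_rw [hshift]
    have hinner : ∀ x : ℝ, (∫ y in (0:ℝ)..1, Gg g k₁ k₂ (x + (a:ℝ) * t) (y + (b:ℝ) * t))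
        = ∫ y in (0:ℝ)..1, Gg g k₁ k₂ (x + (a:ℝ) * t) y := fun x =>
      shift1 _ (hGper2 (x + (a:ℝ) * t)) ((b:ℝ) * t)
    simp_rw [hinner]
    have houter : Function.Periodic (fun x => ∫ y in (0:ℝ)..1, Gg g k₁ k₂ x y) 1 := by
      intro x
      simp only
      congr 1
      ext y
      exact hGper1 y x
    exact shift1 _ houter ((a:ℝ) * t)
  -- integrate over t and swap
  have hW : (∫ t in (0:ℝ)..1, ∫ x in (0:ℝ)..1, ∫ y in (0:ℝ)..1, Fg g k₁ k₂ a b t x y)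
      = ∫ x in (0:ℝ)..1, ∫ y in (0:ℝ)..1, Gg g k₁ k₂ x y := by
    simp_rw [hconst]
    simp
  have hswap1 : (∫ t in (0:ℝ)..1, ∫ x in (0:ℝ)..1, ∫ y in (0:ℝ)..1, Fg g k₁ k₂ a b t x y)
      = ∫ x in (0:ℝ)..1, ∫ t in (0:ℝ)..1, ∫ y in (0:ℝ)..1, Fg g k₁ k₂ a b t x y := by
    apply swap01
    exact continuous_parametric_intervalIntegral_of_continuous'
      (f := fun q : ℝ × ℝ => fun y => Fg g k₁ k₂ a b q.1 q.2 y)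
      (Fg_cont g hg k₁ k₂ a b) 0 1
  have hswap2 : ∀ x : ℝ, (∫ t in (0:ℝ)..1, ∫ y in (0:ℝ)..1, Fg g k₁ k₂ a b t x y)
      = ∫ y in (0:ℝ)..1, ∫ t in (0:ℝ)..1, Fg g k₁ k₂ a b t x y := by
    intro x
    apply swap01
    have h1 : Continuous (fun q : ℝ × ℝ => ((q.1, x), q.2)) := by fun_prop
    exact (Fg_cont g hg k₁ k₂ a b).comp h1
  have hinner0 : ∀ x y : ℝ, (∫ t in (0:ℝ)..1, Fg g k₁ k₂ a b t x y) = 0 := by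
    intro x y
    unfold Fg
    rw [intervalIntegral.integral_mul_const]
    have : (∫ t in (0:ℝ)..1, g (x + (a:ℝ) * t, y + (b:ℝ) * t)) = geodAvgP g a b (x, y) := rfl
    rw [this, hz a b (x, y) hab, zero_mul]
  have hzero : (∫ t in (0:ℝ)..1, ∫ x in (0:ℝ)..1, ∫ y in (0:ℝ)..1, Fg g k₁ k₂ a b t x y) = 0 := by
    rw [hswap1]
    simp_rw [hswap2, hinner0]
    simp
  have := hW.symm.trans hzero
  simpa [Gg] using this

end StepA

section StepB
open intervalIntegral Real Complex

/-- Partial Fourier coefficient in the first variable. -/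
noncomputable def cc (g : ℝ × ℝ → ℂ) (k₁ : ℤ) (y : ℝ) : ℂ :=
  ∫ x in (0:ℝ)..1, g (x, y) * Complex.exp (-2 * (Real.pi:ℂ) * Complex.I * (k₁:ℂ) * x)

lemma allzero (g : ℝ × ℝ → ℂ) (hg : Continuous g) (hper : Periodic2 g)
    (hz : ∀ (a b : ℤ) (p : ℝ × ℝ), Int.gcd a b = 1 → geodAvgP g a b p = 0)
    (hmean0 : (∫ x in (0:ℝ)..1, ∫ y in (0:ℝ)..1, g (x, y)) = 0) :
    ∀ v, g v = 0 := by
  have allcoef : ∀ k₁ k₂ : ℤ,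
      (∫ x in (0:ℝ)..1, ∫ y in (0:ℝ)..1, g (x, y) * ee k₁ k₂ x y) = 0 := by
    intro k₁ k₂
    by_cases hk : k₁ = 0 ∧ k₂ = 0
    · obtain ⟨h1, h2⟩ := hk
      subst h1; subst h2
      have he : ∀ x y : ℝ, g (x, y) * ee 0 0 x y = g (x, y) := by
        intro x y; unfold ee; simp
      simp_rw [he]
      exact hmean0
    · exact stepA g hg hper hz k₁ k₂ hk
  have hc_cont : ∀ k₁ : ℤ, Continuous (cc g k₁) := by
    intro k₁
    unfold cc
    have h1 : Continuous (fun q : ℝ × ℝ => g (q.2, q.1)) := hg.comp (by fun_prop)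
    exact continuous_parametric_intervalIntegral_of_continuous'
      (f := fun y x => g (x, y) * Complex.exp (-2 * (Real.pi:ℂ) * Complex.I * (k₁:ℂ) * x))
      (h1.mul (by fun_prop)) 0 1
  have hc_per : ∀ k₁ : ℤ, Function.Periodic (cc g k₁) 1 := by
    intro k₁ y
    unfold cc
    congr 1
    ext x
    rw [(hper x y).2]
  have hc_fourier : ∀ k₁ k₂ : ℤ,
      (∫ y in (0:ℝ)..1, cc g k₁ y * Complex.exp (-2 * (Real.pi:ℂ) * Complex.I * (k₂:ℂ) * y)) = 0 := by
    intro k₁ k₂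
    have hpull : ∀ y : ℝ, cc g k₁ y * Complex.exp (-2 * (Real.pi:ℂ) * Complex.I * (k₂:ℂ) * y)
        = ∫ x in (0:ℝ)..1, g (x, y) * ee k₁ k₂ x y := by
      intro y
      unfold cc
      rw [← intervalIntegral.integral_mul_const]
      congr 1
      ext x
      rw [mul_assoc]
      congr 1
      unfold ee
      rw [← Complex.exp_add]
      congr 1
      ring
    simp_rw [hpull]
    exact (swap01 (fun x y => g (x, y) * ee k₁ k₂ x y) (Gg_cont g hg k₁ k₂)).symm.trans
      (allcoef k₁ k₂)
  have hc_zero : ∀ (k₁ : ℤ) (y : ℝ), cc g k₁ y = 0 := fun k₁ =>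
    oneD (cc g k₁) (hc_cont k₁) (hc_per k₁) (hc_fourier k₁)
  rintro ⟨x, y⟩
  have hrow_cont : Continuous (fun x => g (x, y)) := hg.comp (by fun_prop)
  have hrow_per : Function.Periodic (fun x => g (x, y)) 1 := fun x => (hper x y).1
  have hrow_four : ∀ n : ℤ,
      (∫ x in (0:ℝ)..1, g (x, y) * Complex.exp (-2 * (Real.pi:ℂ) * Complex.I * (n:ℂ) * x)) = 0 :=
    fun n => hc_zero n y
  exact oneD _ hrow_cont hrow_per hrow_four x

end StepB


/-- for real `f ∈ C²(T²)` with mean zero and `f` not identically zero, the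
supremum over closed geodesics of `(1/|γ|)|∫_γ f dH¹|` is strictly positive. -/
theorem stmt19 (f : ℝ × ℝ → ℝ) (hper : Periodic2 (fun v => (f v : ℂ)))
    (hf : ContDiff ℝ 2 f)
    (hmean : (∫ x in (0:ℝ)..1, ∫ y in (0:ℝ)..1, f (x, y)) = 0)
    (hne : ∃ v, f v ≠ 0) :
    0 < sSup (geodVals (fun v => (f v : ℂ))) := by
  have hg : Continuous (fun v : ℝ × ℝ => (f v : ℂ)) :=
    Complex.continuous_ofReal.comp hf.continuous
  -- boundedness of the set of geodesic averages
  obtain ⟨M, hM⟩ := (isCompact_Icc.prod isCompact_Icc :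
      IsCompact (Set.Icc (0:ℝ) 1 ×ˢ Set.Icc (0:ℝ) 1)).exists_bound_of_continuousOn
    hg.continuousOn
  have hMall : ∀ v : ℝ × ℝ, ‖(f v : ℂ)‖ ≤ M := by
    rintro ⟨x, y⟩
    have hpx : Function.Periodic (fun x => ((f (x, y) : ℂ))) 1 := fun x => (hper x y).1
    have e1 : ((f (x, y) : ℂ)) = ((f (Int.fract x, y) : ℂ)) := by
      have h := hpx.sub_int_mul_eq (x := x) (n := ⌊x⌋)
      rw [mul_one] at h
      rw [← h]; rfl
    have hpy : Function.Periodic (fun y => ((f (Int.fract x, y) : ℂ))) 1 :=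
      fun y => (hper _ y).2
    have e2 : ((f (Int.fract x, y) : ℂ)) = ((f (Int.fract x, Int.fract y) : ℂ)) := by
      have h := hpy.sub_int_mul_eq (x := y) (n := ⌊y⌋)
      rw [mul_one] at h
      rw [← h]; rfl
    rw [e1, e2]
    exact hM _ ⟨⟨(Int.fract_nonneg x), (Int.fract_lt_one x).le⟩,
      ⟨(Int.fract_nonneg y), (Int.fract_lt_one y).le⟩⟩
  have hBdd : BddAbove (geodVals (fun v => (f v : ℂ))) := by
    refine ⟨M, ?_⟩
    rintro v ⟨a, b, p, hab, rfl⟩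
    have := intervalIntegral.norm_integral_le_of_norm_le_const
      (C := M) (a := (0:ℝ)) (b := 1)
      (f := fun t => ((f (p.1 + (a:ℝ) * t, p.2 + (b:ℝ) * t) : ℂ)))
      (fun t _ => hMall _)
    simpa [geodAvgP] using this
  -- existence of a geodesic with nonzero average
  have hkey : ∃ (a b : ℤ) (p : ℝ × ℝ), Int.gcd a b = 1
      ∧ geodAvgP (fun v => (f v : ℂ)) a b p ≠ 0 := by
    by_contra hcon
    push_neg at hcon
    have hmean0 : (∫ x in (0:ℝ)..1, ∫ y in (0:ℝ)..1, ((f (x, y)) : ℂ)) = 0 := by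
      have hinner : ∀ x : ℝ, (∫ y in (0:ℝ)..1, ((f (x, y)) : ℂ))
          = ((∫ y in (0:ℝ)..1, f (x, y) : ℝ) : ℂ) := fun x =>
        intervalIntegral.integral_ofReal
      simp_rw [hinner, intervalIntegral.integral_ofReal, hmean, Complex.ofReal_zero]
    have hall := allzero (fun v => (f v : ℂ)) hg hper hcon hmean0
    obtain ⟨v, hv⟩ := hne
    have := hall v
    simp only [Complex.ofReal_eq_zero] at this
    exact hv this
  obtain ⟨a, b, p, hab, hnz⟩ := hkey
  have hmem : ‖geodAvgP (fun v => (f v : ℂ)) a b p‖ ∈ geodVals (fun v => (f v : ℂ)) :=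
    ⟨a, b, p, hab, rfl⟩
  exact lt_of_lt_of_le (norm_pos_iff.mpr hnz) (le_csSup hBdd hmem)
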